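/- arXiv:math/0701073 — 4 statements merged into one kernel-verified Lean document; each statement's English description precedes it below -/
import Mathlib

section
/- Given any C-vector subspace V ⊂ F of finite dimension n, there is a unique monic differential operator P_V = a_0 + a_1∂ + ⋯ + a_{n−1}∂^{n−1} + ∂^n of degree n such that Zer(P_V) = V. -/
set_option maxHeartbeats 1000000
set_option synthInstance.maxHeartbeats 1000000


open Finset

/-- A derivation on a field `F`. -/
structure IsDerivation {F : Type*} [Field F] (d : F → F) : Prop where
  map_add : ∀ a b : F, d (a + b) = d a + d b
  leibniz : ∀ a b : F, d (a * b) = d a * b + a * d b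

namespace IsDerivation

variable {F : Type*} [Field F] {d : F → F}

theorem map_zero' (hd : IsDerivation d) : d 0 = 0 := by
  have h := hd.map_add 0 0
  simp only [add_zero] at h
  exact (left_eq_add.mp h)

theorem map_one' (hd : IsDerivation d) : d 1 = 0 := by
  have h := hd.leibniz 1 1
  simp only [mul_one, one_mul] at h
  exact (left_eq_add.mp h)

theorem map_neg' (hd : IsDerivation d) (a : F) : d (-a) = - d a := by
  have h := hd.map_add a (-a)
  simp only [add_neg_cancel, hd.map_zero'] at h
  exact (neg_eq_of_add_eq_zero_right h.symm).symm

end IsDerivation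

/-- The subfield of constants of a derivation. -/
def constants (F : Type*) [Field F] (d : F → F) (hd : IsDerivation d) : Subfield F where
  carrier := {a : F | d a = 0}
  zero_mem' := hd.map_zero'
  one_mem' := hd.map_one'
  add_mem' := by
    intro a b ha hb
    simp only [Set.mem_setOf_eq] at *
    rw [hd.map_add, ha, hb, add_zero]
  neg_mem' := by
    intro a ha
    simp only [Set.mem_setOf_eq] at *
    rw [hd.map_neg', ha, neg_zero]
  mul_mem' := by
    intro a b ha hb
    simp only [Set.mem_setOf_eq] at *
    rw [hd.leibniz, ha, hb, zero_mul, mul_zero, add_zero]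
  inv_mem' := by
    intro a ha
    simp only [Set.mem_setOf_eq] at *
    by_cases h0 : a = 0
    · rw [h0, inv_zero]; exact hd.map_zero'
    · have h := hd.leibniz a a⁻¹
      rw [mul_inv_cancel₀ h0, hd.map_one', ha, zero_mul, zero_add] at h
      have h2 : a * d a⁻¹ = 0 := h.symm
      rcases mul_eq_zero.mp h2 with h3 | h3
      · exact absurd h3 h0
      · exact h3
/-- `A` is the ring of differential operators `F⟨∂⟩` over the differential field `(F, d)`:
it contains `F` via `ι`, an element `δ` (the symbol `∂`) satisfying `∂a = a∂ + a'`, and every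
element has a unique expression `Σ ι(aᵢ) ∂^i`. -/
structure IsDiffOpRing {F : Type*} [Field F] (d : F → F) (A : Type*) [Ring A]
    (ι : F →+* A) (δ : A) : Prop where
  comm : ∀ a : F, δ * ι a = ι a * δ + ι (d a)
  repr : ∀ P : A, ∃! c : ℕ →₀ F, P = c.sum fun i x => ι x * δ ^ i

/-- The action of the differential operator with coefficients `a 0, …, a n`
(i.e. `Σ_{i ≤ n} aᵢ ∂^i`) on an element `y` of `F`. -/
def diffOpAct {F : Type*} [Field F] (d : F → F) (n : ℕ) (a : ℕ → F) (y : F) : F :=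
  ∑ i ∈ Finset.range (n + 1), a i * d^[i] y

/-- A differential field is linearly differentially closed if every differential operator of
positive degree has a nonzero zero. -/
def LinDiffClosed {F : Type*} [Field F] (d : F → F) : Prop :=
  ∀ (n : ℕ) (a : ℕ → F), 0 < n → a n ≠ 0 → ∃ y : F, y ≠ 0 ∧ diffOpAct d n a y = 0

/-- `P ∈ F⟨∂⟩` has degree `n`, i.e. `P = Σ_{i ≤ n} ι(aᵢ) δ^i` with `aₙ ≠ 0`. -/
def HasDeg {F : Type*} [Field F] {A : Type*} [Ring A] (ι : F →+* A) (δ : A)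
    (P : A) (n : ℕ) : Prop :=
  ∃ a : ℕ → F, a n ≠ 0 ∧ P = ∑ i ∈ Finset.range (n + 1), ι (a i) * δ ^ i

/-- `K` is the division ring of quotients of the (Ore) domain `A`: `A` embeds in `K` via `j`
and every element of `K` has the form `P⁻¹ Q` with `P, Q ∈ A`, `P ≠ 0`. -/
structure IsQuotientDivisionRing (A : Type*) [Ring A] (K : Type*) [DivisionRing K]
    (j : A →+* K) : Prop where
  inj : Function.Injective j
  quot : ∀ f : K, ∃ P Q : A, P ≠ 0 ∧ f = (j P)⁻¹ * j Q

/-- `f = P⁻¹ Q` is a minimal presentation of `f ∈ F(∂)`: a presentation where `P` has the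
smallest possible degree. -/
def IsMinPres {F : Type*} [Field F] {A : Type*} [Ring A] (ι : F →+* A) (δ : A)
    {K : Type*} [DivisionRing K] (j : A →+* K) (f : K) (P Q : A) : Prop :=
  P ≠ 0 ∧ f = (j P)⁻¹ * j Q ∧
    ∀ (P' Q' : A) (n n' : ℕ), P' ≠ 0 → f = (j P')⁻¹ * j Q' →
      HasDeg ι δ P n → HasDeg ι δ P' n' → n ≤ n'


section AuxiliaryLemmas

variable {F : Type*} [Field F] {d : F → F}

theorem mem_constants' {hd : IsDerivation d} {x : F} :
    x ∈ constants F d hd ↔ d x = 0 := Iff.rfl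

namespace IsDerivation

theorem iter_add (hd : IsDerivation d) (k : ℕ) (x y : F) :
    d^[k] (x + y) = d^[k] x + d^[k] y := by
  induction k generalizing x y with
  | zero => rfl
  | succ k ih =>
      rw [Function.iterate_succ_apply, Function.iterate_succ_apply,
        Function.iterate_succ_apply, hd.map_add, ih]

theorem iter_neg (hd : IsDerivation d) (k : ℕ) (x : F) :
    d^[k] (-x) = - d^[k] x := by
  induction k generalizing x with
  | zero => rfl
  | succ k ih =>
      rw [Function.iterate_succ_apply, Function.iterate_succ_apply, hd.map_neg', ih]

theorem iter_sub (hd : IsDerivation d) (k : ℕ) (x y : F) :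
    d^[k] (x - y) = d^[k] x - d^[k] y := by
  rw [sub_eq_add_neg, hd.iter_add, hd.iter_neg, sub_eq_add_neg]

theorem map_sum' (hd : IsDerivation d) {ι : Type*} (s : Finset ι) (f : ι → F) :
    d (∑ i ∈ s, f i) = ∑ i ∈ s, d (f i) := by
  classical
  induction s using Finset.induction_on with
  | empty => simpa using hd.map_zero'
  | insert _ _ h ih => rw [Finset.sum_insert h, Finset.sum_insert h, hd.map_add, ih]

theorem map_natCast' (hd : IsDerivation d) (n : ℕ) : d (n : F) = 0 := by
  induction n with
  | zero => simpa using hd.map_zero'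
  | succ n ih =>
      push_cast
      rw [hd.map_add, ih, zero_add, hd.map_one']

theorem const_mul' (hd : IsDerivation d) {c : F} (hc : d c = 0) (x : F) :
    d (c * x) = c * d x := by
  rw [hd.leibniz, hc, zero_mul, zero_add]

/-- Iterated Leibniz rule. -/
theorem leibniz_iter (hd : IsDerivation d) (k : ℕ) (x y : F) :
    d^[k] (x * y) = ∑ j ∈ Finset.range (k + 1),
      (k.choose j : F) * (d^[k - j] x * d^[j] y) := by
  induction k with
  | zero => simp
  | succ k ih =>
      rw [Function.iterate_succ_apply', ih, hd.map_sum']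
      have expand : ∀ j ∈ Finset.range (k + 1),
          d ((k.choose j : F) * (d^[k - j] x * d^[j] y)) =
          (k.choose j : F) * (d^[k - j + 1] x * d^[j] y)
          + (k.choose j : F) * (d^[k - j] x * d^[j + 1] y) := by
        intro j _
        rw [hd.const_mul' (hd.map_natCast' _), hd.leibniz, mul_add,
          Function.iterate_succ_apply', Function.iterate_succ_apply']
      rw [Finset.sum_congr rfl expand, Finset.sum_add_distrib]
      rw [Finset.sum_range_succ' (fun j => ((k+1).choose j : F) * (d^[k + 1 - j] x * d^[j] y)) (k+1)]
      have h1 : ∀ j ∈ Finset.range (k + 1),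
          (((k+1).choose (j+1) : ℕ) : F) * (d^[k + 1 - (j+1)] x * d^[j+1] y)
          = (k.choose j : F) * (d^[k - j] x * d^[j + 1] y)
            + (k.choose (j+1) : F) * (d^[k + 1 - (j+1)] x * d^[j+1] y) := by
        intro j _
        rw [Nat.choose_succ_succ, Nat.succ_sub_succ]
        push_cast
        ring
      rw [Finset.sum_congr rfl h1, Finset.sum_add_distrib]
      have h2 : ∑ j ∈ Finset.range (k + 1), (k.choose j : F) * (d^[k - j + 1] x * d^[j] y)
          = ∑ j ∈ Finset.range (k + 1), (k.choose (j+1) : F) * (d^[k + 1 - (j+1)] x * d^[j+1] y)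
            + ((k+1).choose 0 : F) * (d^[k + 1 - 0] x * d^[0] y) := by
        have e1 : ∑ j ∈ Finset.range (k + 1), (k.choose j : F) * (d^[k - j + 1] x * d^[j] y)
            = ∑ j ∈ Finset.range (k + 1), (k.choose j : F) * (d^[k + 1 - j] x * d^[j] y) := by
          refine Finset.sum_congr rfl fun j hj => ?_
          have hjk : j ≤ k := Nat.lt_succ_iff.mp (Finset.mem_range.mp hj)
          have : k - j + 1 = k + 1 - j := by omega
          rw [this]
        have e2 : ∑ j ∈ Finset.range (k + 1), (k.choose j : F) * (d^[k + 1 - j] x * d^[j] y)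
            = ∑ j ∈ Finset.range (k + 2), (k.choose j : F) * (d^[k + 1 - j] x * d^[j] y) := by
          conv_rhs => rw [Finset.sum_range_succ]
          simp [Nat.choose_succ_self]
        have e3 := Finset.sum_range_succ'
          (fun j => (k.choose j : F) * (d^[k + 1 - j] x * d^[j] y)) (k+1)
        rw [e1, e2, e3]
        simp
      rw [h2]
      push_cast
      ring

/-- Expansion of a differential operator applied to a product. -/
theorem op_mul (hd : IsDerivation d) (m : ℕ) (c : ℕ → F) (x y : F) :
    ∑ i ∈ Finset.range m, c i * d^[i] (x * y)
      = ∑ j ∈ Finset.range m,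
          (∑ i ∈ Finset.Ico j m, c i * (i.choose j : F) * d^[i - j] x) * d^[j] y := by
  have e1 : ∀ i ∈ Finset.range m, c i * d^[i] (x * y)
      = ∑ j ∈ Finset.range (i + 1), c i * (i.choose j : F) * d^[i - j] x * d^[j] y := by
    intro i _
    rw [hd.leibniz_iter, Finset.mul_sum]
    exact Finset.sum_congr rfl fun j _ => by ring
  rw [Finset.sum_congr rfl e1]
  have e2 := Finset.sum_Ico_Ico_comm 0 m (fun j i => c i * (i.choose j : F) * d^[i - j] x * d^[j] y)
  simp only [Nat.Ico_zero_eq_range] at e2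
  rw [← e2]
  exact Finset.sum_congr rfl fun j _ => by rw [Finset.sum_mul]

/-- Composition with the first-order operator `∂ - r`. -/
theorem compOp (hd : IsDerivation d) (n : ℕ) (b' : ℕ → F) (r : F)
    (hbn : b' n = 1) (y : F) :
    ∑ i ∈ Finset.range (n + 1), b' i * d^[i] (d y - r * y)
      = ∑ j ∈ Finset.range (n + 1),
          ((if j = 0 then 0 else b' (j - 1))
            - ∑ i ∈ Finset.Ico j (n + 1), b' i * (i.choose j : F) * d^[i - j] r) * d^[j] y
        + d^[n + 1] y := by
  have h1 : ∑ i ∈ Finset.range (n + 1), b' i * d^[i] (d y - r * y)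
      = ∑ i ∈ Finset.range (n + 1), b' i * d^[i + 1] y
        - ∑ i ∈ Finset.range (n + 1), b' i * d^[i] (r * y) := by
    rw [← Finset.sum_sub_distrib]
    refine Finset.sum_congr rfl fun i _ => ?_
    rw [hd.iter_sub, mul_sub, Function.iterate_succ_apply]
  rw [h1, hd.op_mul]
  have h2 : ∑ i ∈ Finset.range (n + 1), b' i * d^[i + 1] y
      = ∑ j ∈ Finset.range (n + 1), (if j = 0 then 0 else b' (j - 1)) * d^[j] y
        + d^[n + 1] y := by
    rw [Finset.sum_range_succ, hbn, one_mul]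
    congr 1
    rw [Finset.sum_range_succ' (fun j => (if j = 0 then 0 else b' (j - 1)) * d^[j] y) n]
    simp
  rw [h2]
  rw [Finset.sum_congr rfl (fun j _ => sub_mul (if j = 0 then 0 else b' (j - 1))
    (∑ i ∈ Finset.Ico j (n + 1), b' i * (i.choose j : F) * d^[i - j] r) (d^[j] y)),
    Finset.sum_sub_distrib]
  ring

end IsDerivation

/-- A differential operator of degree at most `k` annihilating `k + 1` elements that are
linearly independent over the constants must be zero. -/
theorem zerBound (hd : IsDerivation d) :
    ∀ (k : ℕ) (a : ℕ → F) (y : Fin (k + 1) → F),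
      LinearIndependent (constants F d hd) y →
      (∀ m, ∑ i ∈ Finset.range (k + 1), a i * d^[i] (y m) = 0) →
      ∀ i, i ≤ k → a i = 0 := by
  intro k
  induction k with
  | zero =>
      intro a y hli hz i hi
      have h0 := hz 0
      simp only [zero_add, Finset.sum_range_one, Function.iterate_zero_apply] at h0
      have hy0 : y 0 ≠ 0 := hli.ne_zero 0
      interval_cases i
      exact (mul_eq_zero.mp h0).resolve_right hy0
  | succ k ih =>
      intro a y hli hz i hik
      have hy0 : y 0 ≠ 0 := hli.ne_zero 0
      set b : ℕ → F := fun j => ∑ i ∈ Finset.Ico j (k + 2),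
        a i * (i.choose j : F) * d^[i - j] (y 0) with hbdef
      have hconv : ∀ z, ∑ i ∈ Finset.range (k + 2), a i * d^[i] (y 0 * z)
          = ∑ j ∈ Finset.range (k + 2), b j * d^[j] z := fun z => hd.op_mul (k + 2) a (y 0) z
      have hb0 : b 0 = 0 := by
        have h := hz 0
        rw [hbdef]
        simp only [Nat.Ico_zero_eq_range, Nat.choose_zero_right, Nat.cast_one, mul_one,
          Nat.sub_zero]
        exact h
      set z : Fin (k + 1) → F := fun m => y m.succ * (y 0)⁻¹ with hzdef
      set w : Fin (k + 1) → F := fun m => d (z m) with hwdef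
      have hyz : ∀ m, y 0 * z m = y m.succ := by
        intro m
        rw [hzdef]
        field_simp
      have hPz : ∀ m, ∑ j ∈ Finset.range (k + 2), b j * d^[j] (z m) = 0 := by
        intro m
        rw [← hconv, Finset.sum_congr rfl fun i _ => by rw [hyz m]]
        exact hz m.succ
      have hw : ∀ m, ∑ j ∈ Finset.range (k + 1), b (j + 1) * d^[j] (w m) = 0 := by
        intro m
        have h := hPz m
        rw [Finset.sum_range_succ' (fun j => b j * d^[j] (z m)) (k + 1)] at h
        simp only [hb0, zero_mul, add_zero] at h
        rw [← h]
        exact Finset.sum_congr rfl fun j _ => by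
          rw [hwdef]
          simp [Function.iterate_succ_apply]
      have hwli : LinearIndependent (constants F d hd) w := by
        rw [Fintype.linearIndependent_iff]
        intro g hg
        have hg' : ∑ m : Fin (k + 1), (g m : F) * w m = 0 := hg
        have hs : d (∑ m : Fin (k + 1), (g m : F) * z m) = 0 := by
          rw [hd.map_sum']
          rw [Finset.sum_congr rfl fun m _ => hd.const_mul' (mem_constants'.mp (g m).2) (z m)]
          exact hg'
        set s : F := ∑ m : Fin (k + 1), (g m : F) * z m with hsdef
        have hsC : s ∈ constants F d hd := mem_constants'.mpr hs
        set c0 : constants F d hd := ⟨s, hsC⟩ with hc0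
        set G : Fin (k + 2) → constants F d hd := Fin.cons (-c0) g with hG
        have hrel : ∑ m : Fin (k + 2), G m • y m = 0 := by
          have hsmul : ∀ m : Fin (k + 2), G m • y m = (G m : F) * y m := fun m => rfl
          rw [Finset.sum_congr rfl fun m _ => hsmul m, Fin.sum_univ_succ]
          simp only [hG, Fin.cons_zero, Fin.cons_succ]
          have hterm : ∀ m : Fin (k + 1), (g m : F) * y m.succ = (g m : F) * z m * y 0 := by
            intro m
            rw [← hyz m]
            ring
          rw [Finset.sum_congr rfl fun m _ => hterm m, ← Finset.sum_mul, ← hsdef]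
          have : ((-c0 : constants F d hd) : F) = -s := rfl
          rw [this]
          ring
        have hGz := Fintype.linearIndependent_iff.mp hli G hrel
        intro m
        have h2 := hGz m.succ
        rw [hG, Fin.cons_succ] at h2
        exact h2
      have hc := ih (fun j => b (j + 1)) w hwli hw
      have hball : ∀ j, j ≤ k + 1 → b j = 0 := by
        intro j hj
        cases j with
        | zero => exact hb0
        | succ j => exact hc j (by omega)
      have step : ∀ j, j ≤ k + 1 → (∀ i', j < i' → i' ≤ k + 1 → a i' = 0) → a j = 0 := by
        intro j hj hgt
        have hbj := hball j hj
        rw [hbdef] at hbj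
        have hbj' : ∑ i' ∈ Finset.Ico j (k + 2),
            a i' * (i'.choose j : F) * d^[i' - j] (y 0) = 0 := hbj
        rw [Finset.sum_eq_sum_Ico_succ_bot (by omega : j < k + 2)] at hbj'
        have hrest : ∀ i' ∈ Finset.Ico (j + 1) (k + 2),
            a i' * (i'.choose j : F) * d^[i' - j] (y 0) = 0 := by
          intro i' hi'
          have := Finset.mem_Ico.mp hi'
          rw [hgt i' (by omega) (by omega), zero_mul, zero_mul]
        rw [Finset.sum_eq_zero hrest, add_zero, Nat.choose_self, Nat.sub_self] at hbj'
        simp only [Nat.cast_one, mul_one, Function.iterate_zero_apply] at hbj'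
        exact (mul_eq_zero.mp hbj').resolve_right hy0
      have hall : ∀ t j, j ≤ k + 1 → k + 1 ≤ j + t → a j = 0 := by
        intro t
        induction t with
        | zero =>
            intro j h1 h2
            have : j = k + 1 := by omega
            subst this
            exact step _ le_rfl (fun i' h3 h4 => absurd h4 (by omega))
        | succ t iht =>
            intro j h1 h2
            exact step j h1 (fun i' h3 h4 => iht i' h4 (by omega))
      exact hall (k + 1) i (by omega) (by omega)

/-- The first-order operator `y ↦ d y - r y` as a `C`-linear map. -/
noncomputable def Tmap (hd : IsDerivation d) (r : F) : F →ₗ[constants F d hd] F where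
  toFun x := d x - r * x
  map_add' x y := by
    show d (x + y) - r * (x + y) = (d x - r * x) + (d y - r * y)
    rw [hd.map_add]; ring
  map_smul' c x := by
    have h1 : c • x = (c : F) * x := rfl
    have h2 : ∀ z : F, c • z = (c : F) * z := fun z => rfl
    simp only [RingHom.id_apply, h1, h2]
    rw [hd.const_mul' c.2]
    ring

theorem Tmap_ker (hd : IsDerivation d) {u : F} (hu : u ≠ 0) {x : F}
    (hx : Tmap hd (d u / u) x = 0) : ∃ c : constants F d hd, x = (c : F) * u := by
  have hdx : d x = d u / u * x := by
    have h0 : d x - d u / u * x = 0 := hx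
    linear_combination h0
  have hinv : d u⁻¹ = -(d u * (u⁻¹ * u⁻¹)) := by
    have h := hd.leibniz u u⁻¹
    rw [mul_inv_cancel₀ hu, hd.map_one'] at h
    have h2 : u * d u⁻¹ = -(d u * u⁻¹) := by linear_combination -h
    have h3 : u⁻¹ * (u * d u⁻¹) = d u⁻¹ := by rw [← mul_assoc, inv_mul_cancel₀ hu, one_mul]
    rw [← h3, h2]
    ring
  have hc : d (x * u⁻¹) = 0 := by
    rw [hd.leibniz, hdx, hinv]
    field_simp
    ring
  exact ⟨⟨x * u⁻¹, mem_constants'.mpr hc⟩, by field_simp⟩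

/-- Existence of a monic differential operator of degree `n` with zero set `V`. -/
theorem existsOp (hd : IsDerivation d) :
    ∀ (n : ℕ) (V : Submodule (constants F d hd) F), FiniteDimensional (constants F d hd) V →
      Module.finrank (constants F d hd) V = n →
      ∃ a : Fin n → F,
        {y : F | (∑ i : Fin n, a i * d^[(i : ℕ)] y) + d^[n] y = 0} = (V : Set F) := by
  intro n
  induction n with
  | zero =>
      intro V hFD hdim
      have hbot : V = ⊥ := Submodule.finrank_eq_zero.mp hdim
      refine ⟨fun _ => 0, ?_⟩
      ext y
      simp [hbot]
  | succ n ihn =>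
      intro V hFD hdim
      obtain ⟨u0, hu0⟩ : ∃ v : V, v ≠ 0 := by
        rw [← Module.finrank_pos_iff_exists_ne_zero (R := constants F d hd)]
        omega
      set u : F := (u0 : F) with hudef
      have huV : u ∈ V := u0.2
      have hu : u ≠ 0 := fun h => hu0 (Subtype.ext h)
      set r : F := d u / u with hrdef
      set T := Tmap hd r with hT
      have hTu : T u = 0 := by
        show d u - d u / u * u = 0
        rw [div_mul_cancel₀ _ hu, sub_self]
      set W := V.map T with hW
      haveI : FiniteDimensional (constants F d hd) W := Module.Finite.map V T
      set f : V →ₗ[constants F d hd] F := T.comp V.subtype with hf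
      have hrange : LinearMap.range f = W := by
        rw [hf, LinearMap.range_comp, Submodule.range_subtype]
      have hker : LinearMap.ker f = Submodule.span (constants F d hd) {u0} := by
        ext v
        simp only [LinearMap.mem_ker, hf, LinearMap.comp_apply, Submodule.subtype_apply,
          Submodule.mem_span_singleton]
        constructor
        · intro hv
          obtain ⟨c, hc⟩ := Tmap_ker hd hu hv
          exact ⟨c, Subtype.ext (((by rfl : ((c • u0 : V) : F) = (c : F) * u)).trans hc.symm)⟩
        · rintro ⟨c, rfl⟩
          have : ((c • u0 : V) : F) = c • u := rfl
          rw [this, map_smul, hTu, smul_zero]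
      have hrank : Module.finrank (constants F d hd) W = n := by
        have hrn := LinearMap.finrank_range_add_finrank_ker f
        rw [hrange, hker, finrank_span_singleton hu0, hdim] at hrn
        omega
      obtain ⟨b, hbset⟩ := ihn W inferInstance hrank
      set b' : ℕ → F := fun i => if h : i < n then b ⟨i, h⟩ else 1 with hb'
      have hbn : b' n = 1 := by simp [hb']
      set aN : ℕ → F := fun j => (if j = 0 then 0 else b' (j - 1))
        - ∑ i ∈ Finset.Ico j (n + 1), b' i * (i.choose j : F) * d^[i - j] r with haN
      refine ⟨fun j => aN (j : ℕ), ?_⟩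
      have hop : ∀ v : F, (∑ i ∈ Finset.range (n + 1), b' i * d^[i] v = 0) ↔ v ∈ W := by
        intro v
        rw [Finset.sum_range_succ, hbn, one_mul]
        have hsum : ∑ i ∈ Finset.range n, b' i * d^[i] v
            = ∑ i : Fin n, b i * d^[(i : ℕ)] v := by
          rw [← Fin.sum_univ_eq_sum_range (fun i => b' i * d^[i] v) n]
          refine Finset.sum_congr rfl fun i _ => ?_
          simp [hb', i.isLt]
        rw [hsum]
        constructor
        · intro h
          have hv : v ∈ {y : F | ∑ i : Fin n, b i * d^[(i : ℕ)] y + d^[n] y = 0} := h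
          rw [hbset] at hv
          exact hv
        · intro h
          have hv : v ∈ (W : Set F) := h
          rw [← hbset] at hv
          exact hv
      ext y
      simp only [Set.mem_setOf_eq, SetLike.mem_coe]
      have key : ∑ i ∈ Finset.range (n + 1), b' i * d^[i] (d y - r * y)
          = ∑ j ∈ Finset.range (n + 1), aN j * d^[j] y + d^[n + 1] y := by
        rw [hd.compOp n b' r hbn y]
      rw [Fin.sum_univ_eq_sum_range (fun j => aN j * d^[j] y) (n + 1), ← key,
        hop (d y - r * y)]
      constructor
      · intro hyW
        obtain ⟨v, hvV, hvT⟩ := Submodule.mem_map.mp hyW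
        have hT0 : T (y - v) = 0 := by
          rw [map_sub, hvT]
          show (d y - r * y) - (d y - r * y) = 0
          rw [sub_self]
        obtain ⟨c, hc⟩ := Tmap_ker hd hu hT0
        have hy : y = (c : F) * u + v := by linear_combination hc
        have hcu : (c : F) * u ∈ V := V.smul_mem c huV
        rw [hy]
        exact V.add_mem hcu hvV
      · intro hyV
        exact Submodule.mem_map.mpr ⟨y, hyV, rfl⟩

end AuxiliaryLemmas

/-- Given any `C`-vector subspace `V ⊆ F` of finite dimension `n`, there is a
unique monic differential operator `P_V = a₀ + a₁∂ + ⋯ + a_{n-1}∂^{n-1} + ∂^n` of degree `n`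
such that `Zer(P_V) = V`. -/
theorem existsUnique_monic_diffOp_with_zeros {F : Type*} [Field F] [CharZero F]
    (d : F → F) (hd : IsDerivation d)
    (halg : IsAlgClosed (constants F d hd))
    (hne : constants F d hd ≠ ⊤)
    (n : ℕ) (V : Submodule (constants F d hd) F)
    [FiniteDimensional (constants F d hd) V]
    (hdim : Module.finrank (constants F d hd) V = n) :
    ∃! a : Fin n → F,
      {y : F | (∑ i : Fin n, a i * d^[(i : ℕ)] y) + d^[n] y = 0} = (V : Set F) := by
  obtain ⟨a, ha⟩ := existsOp hd n V inferInstance hdim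
  refine ⟨a, ha, ?_⟩
  intro a' ha'
  cases n with
  | zero => funext j; exact j.elim0
  | succ m =>
      let yb := Module.finBasisOfFinrankEq (constants F d hd) V hdim
      set yF : Fin (m + 1) → F := fun i => ((yb i : V) : F) with hyF
      have hli : LinearIndependent (constants F d hd) yF :=
        yb.linearIndependent.map' V.subtype (Submodule.ker_subtype V)
      have hmem : ∀ i, yF i ∈ V := fun i => (yb i).2
      set c : ℕ → F := fun i => if h : i < m + 1 then a' ⟨i, h⟩ - a ⟨i, h⟩ else 0 with hcdef
      have hz : ∀ j : Fin (m + 1), ∑ i ∈ Finset.range (m + 1), c i * d^[i] (yF j) = 0 := by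
        intro j
        have h1 : (∑ i : Fin (m + 1), a i * d^[(i : ℕ)] (yF j)) + d^[m + 1] (yF j) = 0 := by
          have hv : yF j ∈ {y : F | (∑ i : Fin (m + 1), a i * d^[(i : ℕ)] y) + d^[m + 1] y = 0} := by
            rw [ha]; exact hmem j
          exact hv
        have h2 : (∑ i : Fin (m + 1), a' i * d^[(i : ℕ)] (yF j)) + d^[m + 1] (yF j) = 0 := by
          have hv : yF j ∈ {y : F | (∑ i : Fin (m + 1), a' i * d^[(i : ℕ)] y) + d^[m + 1] y = 0} := by
            rw [ha']; exact hmem j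
          exact hv
        have he : ∑ i ∈ Finset.range (m + 1), c i * d^[i] (yF j)
            = ((∑ i : Fin (m + 1), a' i * d^[(i : ℕ)] (yF j)) + d^[m + 1] (yF j))
              - ((∑ i : Fin (m + 1), a i * d^[(i : ℕ)] (yF j)) + d^[m + 1] (yF j)) := by
          rw [← Fin.sum_univ_eq_sum_range (fun i => c i * d^[i] (yF j)) (m + 1)]
          have e : ∀ i : Fin (m + 1), c (i : ℕ) * d^[(i : ℕ)] (yF j)
              = a' i * d^[(i : ℕ)] (yF j) - a i * d^[(i : ℕ)] (yF j) := by
            intro i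
            rw [hcdef]
            simp only [i.isLt, dif_pos, Fin.eta]
            ring
          rw [Finset.sum_congr rfl fun i _ => e i, Finset.sum_sub_distrib]
          ring
        rw [he, h1, h2, sub_zero]
      have hzero := zerBound hd m c yF hli hz
      funext j
      have hj := hzero (j : ℕ) (by omega)
      rw [hcdef] at hj
      simp only [j.isLt, dif_pos, Fin.eta] at hj
      linear_combination hj
end

section
/- If F is linearly differentially closed, then every differential operator P ∈ F⟨∂⟩ of degree n ≥ 1 with leading coefficient a_n can be written as a product of degree-one factors: P = a_n(∂ + x_1)⋯(∂ + x_n) for some x_1, …, x_n ∈ F. -/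
open Finset

section Factorization

variable {F : Type*} [Field F]

/-- Coefficients of the quotient of `δ^i` by `δ + ι (-(d y / y))`. -/
def cseq (d : F → F) (y : F) : ℕ → ℕ → F
  | 0, _ => 0
  | i+1, 0 => d (cseq d y i 0) + d^[i] y / y
  | i+1, j+1 => cseq d y i j + d (cseq d y i (j+1))

theorem cseq_zero {d : F → F} (hd : IsDerivation d) (y : F) :
    ∀ i j : ℕ, i ≤ j → cseq d y i j = 0 := by
  intro i
  induction i with
  | zero => intro j _; rfl
  | succ i ih =>
    intro j hij
    obtain ⟨j', rfl⟩ : ∃ j', j = j' + 1 := ⟨j - 1, by omega⟩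
    show cseq d y i j' + d (cseq d y i (j' + 1)) = 0
    rw [ih _ (by omega), ih _ (by omega), hd.map_zero', add_zero]

theorem cseq_lead {d : F → F} (hd : IsDerivation d) {y : F} (hy : y ≠ 0) :
    ∀ i : ℕ, cseq d y (i + 1) i = 1 := by
  intro i
  induction i with
  | zero =>
    show d (cseq d y 0 0) + d^[0] y / y = 1
    show d 0 + y / y = 1
    rw [hd.map_zero', div_self hy, zero_add]
  | succ i ih =>
    show cseq d y (i + 1) i + d (cseq d y (i + 1) (i + 1)) = 1
    rw [ih, cseq_zero hd y (i+1) (i+1) le_rfl, hd.map_zero', add_zero]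

theorem IsDerivation.map_inv' {d : F → F} (hd : IsDerivation d) {y : F} (hy : y ≠ 0) :
    d y⁻¹ = -(d y / y ^ 2) := by
  have h := hd.leibniz y y⁻¹
  rw [mul_inv_cancel₀ hy, hd.map_one'] at h
  field_simp at h ⊢
  linear_combination -h

theorem IsDerivation.map_div' {d : F → F} (hd : IsDerivation d) (u : F) {y : F} (hy : y ≠ 0) :
    d (u / y) = d u / y - u * d y / y ^ 2 := by
  rw [div_eq_mul_inv, hd.leibniz, hd.map_inv' hy]
  field_simp
  ring

/-- The key recursion on the "remainder" `d^[i] y / y`. -/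
theorem rseq_step {d : F → F} (hd : IsDerivation d) {y : F} (hy : y ≠ 0) (i : ℕ) :
    d (d^[i] y / y) - (d^[i] y / y) * (-(d y / y)) = d^[i+1] y / y := by
  rw [hd.map_div' _ hy, Function.iterate_succ_apply']
  field_simp
  ring

variable {A : Type*} [Ring A] {d : F → F} (ι : F →+* A) (δ : A)

/-- Division of `δ^i` by the monic linear operator `δ + ι (-(d y / y))`. -/
theorem delta_pow_div (hd : IsDerivation d) (hA : IsDiffOpRing d A ι δ)
    {y : F} (hy : y ≠ 0) (i : ℕ) :
    δ ^ i = (∑ j ∈ Finset.range i, ι (cseq d y i j) * δ ^ j) * (δ + ι (-(d y / y)))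
      + ι (d^[i] y / y) := by
  induction i with
  | zero =>
    simp [div_self hy]
  | succ i ih =>
    have e1 : ∀ j, δ * (ι (cseq d y i j) * δ ^ j)
        = ι (cseq d y i j) * δ ^ (j+1) + ι (d (cseq d y i j)) * δ ^ j := by
      intro j
      rw [← mul_assoc, hA.comm, add_mul, mul_assoc, ← pow_succ']
    have e2 : ∑ j ∈ Finset.range i, ι (d (cseq d y i j)) * δ ^ j
        = ∑ j ∈ Finset.range i, ι (d (cseq d y i (j+1))) * δ ^ (j+1)
          + ι (d (cseq d y i 0)) * δ ^ 0 := by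
      have h := Finset.sum_range_succ' (fun j => ι (d (cseq d y i j)) * δ ^ j) i
      rw [Finset.sum_range_succ, cseq_zero hd y i i le_rfl, hd.map_zero',
        map_zero, zero_mul, add_zero] at h
      exact h
    have hq : ∑ j ∈ Finset.range (i+1), ι (cseq d y (i+1) j) * δ ^ j
        = δ * (∑ j ∈ Finset.range i, ι (cseq d y i j) * δ ^ j) + ι (d^[i] y / y) := by
      rw [Finset.mul_sum]
      simp only [e1, Finset.sum_add_distrib, e2, Finset.sum_range_succ']
      have e3 : ∀ j, cseq d y (i+1) (j+1) = cseq d y i j + d (cseq d y i (j+1)) :=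
        fun j => rfl
      have e4 : cseq d y (i+1) 0 = d (cseq d y i 0) + d^[i] y / y := rfl
      simp only [e3, e4, map_add, add_mul, Finset.sum_add_distrib, pow_zero, mul_one]
      abel
    calc δ ^ (i+1)
        = δ * ((∑ j ∈ Finset.range i, ι (cseq d y i j) * δ ^ j) * (δ + ι (-(d y / y))))
          + (ι (d^[i] y / y) * δ + ι (d (d^[i] y / y))) := by
          rw [pow_succ', ih, mul_add, hA.comm]
      _ = (δ * (∑ j ∈ Finset.range i, ι (cseq d y i j) * δ ^ j) + ι (d^[i] y / y))
            * (δ + ι (-(d y / y)))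
          + ι (d (d^[i] y / y) - (d^[i] y / y) * (-(d y / y))) := by
          rw [map_sub, map_mul]; noncomm_ring
      _ = (∑ j ∈ Finset.range (i+1), ι (cseq d y (i+1) j) * δ ^ j) * (δ + ι (-(d y / y)))
          + ι (d^[i+1] y / y) := by rw [← hq, rseq_step hd hy]

/-- Factoring out the linear operator annihilating `y` from a differential operator. -/
theorem factor_out (hd : IsDerivation d) (hA : IsDiffOpRing d A ι δ)
    {y : F} (hy : y ≠ 0) (n : ℕ) (a : ℕ → F) :
    ∑ i ∈ Finset.range (n+2), ι (a i) * δ ^ i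
      = (∑ j ∈ Finset.range (n+1),
          ι (∑ i ∈ Finset.range (n+2), a i * cseq d y i j) * δ ^ j) * (δ + ι (-(d y / y)))
        + ι (diffOpAct d (n+1) a y / y) := by
  have e1 : ∀ i ∈ Finset.range (n+2), ι (a i) * δ ^ i
      = (∑ j ∈ Finset.range (n+1), ι (a i * cseq d y i j) * δ ^ j) * (δ + ι (-(d y / y)))
        + ι (a i * (d^[i] y / y)) := by
    intro i hi
    rw [delta_pow_div ι δ hd hA hy i, mul_add, ← map_mul, ← mul_assoc, Finset.mul_sum]
    congr 2
    rw [← Finset.sum_subset (Finset.range_subset_range.2 (by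
        simp only [Finset.mem_range] at hi; omega : i ≤ n+1))]
    · exact Finset.sum_congr rfl fun j _ => by rw [← mul_assoc, ← map_mul]
    · intro j _ hj
      simp only [Finset.mem_range, not_lt] at hj
      rw [cseq_zero hd y i j hj, mul_zero, map_zero, zero_mul]
  rw [Finset.sum_congr rfl e1, Finset.sum_add_distrib, ← Finset.sum_mul, Finset.sum_comm]
  congr 1
  · congr 1
    exact Finset.sum_congr rfl fun j _ => by rw [← Finset.sum_mul, ← map_sum]
  · rw [← map_sum]
    congr 1
    rw [diffOpAct, Finset.sum_div]
    exact Finset.sum_congr rfl fun i _ => (mul_div_assoc _ _ _).symm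

theorem lead_coeff (hd : IsDerivation d) {y : F} (hy : y ≠ 0) (n : ℕ) (a : ℕ → F) :
    ∑ i ∈ Finset.range (n+2), a i * cseq d y i n = a (n+1) := by
  rw [Finset.sum_eq_single_of_mem (n+1) (Finset.self_mem_range_succ _)]
  · rw [cseq_lead hd hy, mul_one]
  · intro i hi hne
    simp only [Finset.mem_range] at hi
    rw [cseq_zero hd y i n (by omega), mul_zero]

end Factorization

/-- If `F` is linearly differentially closed, then every differential operator
`P = Σ_{i ≤ n} aᵢ ∂^i` of degree `n ≥ 1` (leading coefficient `aₙ ≠ 0`) can be written as a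
product of degree-one factors: `P = aₙ (∂ + x₁) ⋯ (∂ + xₙ)`. -/
theorem diffOp_eq_prod_linear_factors {F : Type*} [Field F] [CharZero F]
    (d : F → F) (hd : IsDerivation d)
    (halg : IsAlgClosed (constants F d hd))
    (hne : constants F d hd ≠ ⊤)
    (hldc : LinDiffClosed d)
    {A : Type*} [Ring A] (ι : F →+* A) (δ : A) (hA : IsDiffOpRing d A ι δ)
    (n : ℕ) (hn : 1 ≤ n) (a : ℕ → F) (han : a n ≠ 0) :
    ∃ x : Fin n → F,
      ∑ i ∈ Finset.range (n + 1), ι (a i) * δ ^ i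
        = ι (a n) * (List.ofFn fun i : Fin n => δ + ι (x i)).prod := by
  induction n, hn using Nat.le_induction generalizing a with
  | base =>
    refine ⟨fun _ => a 0 / a 1, ?_⟩
    have hl : (List.ofFn fun i : Fin 1 => δ + ι ((fun _ => a 0 / a 1) i)).prod
        = δ + ι (a 0 / a 1) := by simp
    rw [hl, mul_add, ← map_mul, mul_div_cancel₀ _ han,
      Finset.sum_range_succ, Finset.sum_range_succ, Finset.sum_range_zero]
    simp only [pow_zero, pow_one, mul_one, zero_add]
    abel
  | succ n hn ih =>
    obtain ⟨y, hy, hact⟩ := hldc (n+1) a (by omega) han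
    have hfac := factor_out ι δ hd hA hy n a
    rw [hact, zero_div, map_zero, add_zero] at hfac
    set b : ℕ → F := fun j => ∑ i ∈ Finset.range (n+2), a i * cseq d y i j with hbdef
    have hb : b n = a (n+1) := lead_coeff hd hy n a
    obtain ⟨z, hz⟩ := ih b (by rw [hb]; exact han)
    refine ⟨Fin.snoc z (-(d y / y)), ?_⟩
    have hrange : n + 1 + 1 = n + 2 := rfl
    rw [hrange, hfac, hz, hb, mul_assoc]
    congr 1
    rw [List.ofFn_succ', List.prod_concat]
    simp only [Fin.snoc_castSucc, Fin.snoc_last]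
end

section
/- Let V and W be two finite-dimensional C-vector subspaces of F. Then there exists a nonzero a ∈ F such that aV ∩ W = {0}. -/
set_option maxHeartbeats 4000000
set_option synthInstance.maxHeartbeats 4000000


open Finset

/-- Let `V` and `W` be two finite-dimensional `C`-subspaces of `F`. Then there
is a nonzero `a ∈ F` such that `aV ∩ W = {0}`. -/
theorem exists_mul_inter_eq_bot {F : Type*} [Field F] [CharZero F]
    (d : F → F) (hd : IsDerivation d)
    (halg : IsAlgClosed (constants F d hd))
    (hne : constants F d hd ≠ ⊤)
    (V W : Submodule (constants F d hd) F)
    [FiniteDimensional (constants F d hd) V]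
    [FiniteDimensional (constants F d hd) W] :
    ∃ a : F, a ≠ 0 ∧
      Submodule.map (LinearMap.mulLeft (constants F d hd) a) V ⊓ W = ⊥ := by
  classical
  obtain ⟨t, ht⟩ : ∃ t : F, t ∉ constants F d hd := by
    by_contra h
    push_neg at h
    exact hne (by ext x; simpa using h x)
  have ht0 : t ≠ 0 := fun h => ht (h ▸ (constants F d hd).zero_mem)
  -- `t` is transcendental over the constants
  have htr : Transcendental (constants F d hd) t := by
    intro halgb
    have hint : IsIntegral (constants F d hd) t := halgb.isIntegral
    have h1 : (minpoly (constants F d hd) t).degree = 1 :=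
      IsAlgClosed.degree_eq_one_of_irreducible _ (minpoly.irreducible hint)
    have h0 := minpoly.aeval (constants F d hd) t
    have hm : (minpoly (constants F d hd) t).leadingCoeff = 1 :=
      (minpoly.monic hint).leadingCoeff
    rw [Polynomial.eq_X_add_C_of_degree_eq_one h1, hm, Polynomial.C_1, one_mul, map_add,
      Polynomial.aeval_X, Polynomial.aeval_C] at h0
    have : t = ((-(minpoly (constants F d hd) t).coeff 0 : constants F d hd) : F) := by
      have := eq_neg_of_add_eq_zero_left h0
      exact this
    exact ht (this ▸ SetLike.coe_mem _)
  have hinj : Function.Injective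
      (Polynomial.aeval t : Polynomial (constants F d hd) →ₐ[constants F d hd] F) :=
    transcendental_iff_injective.mp htr
  set R : Subalgebra (constants F d hd) F :=
    (Polynomial.aeval t : Polynomial (constants F d hd) →ₐ[constants F d hd] F).range with hRdef
  let ψ : Polynomial (constants F d hd) ≃ₐ[constants F d hd] R := AlgEquiv.ofInjective _ hinj
  haveI : IsPrincipalIdealRing ↥R :=
    IsPrincipalIdealRing.of_surjective ψ.toRingHom ψ.surjective
  obtain ⟨sV, hsV⟩ : V.FG := (Submodule.fg_iff_finiteDimensional V).mpr ‹_›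
  obtain ⟨sW, hsW⟩ : W.FG := (Submodule.fg_iff_finiteDimensional W).mpr ‹_›
  set M : Submodule ↥R F := Submodule.span ↥R (↑sV ∪ ↑sW) with hMdef
  haveI : Module.Finite ↥R ↥M :=
    Module.Finite.span_of_finite _ ((sV.finite_toSet).union sW.finite_toSet)
  haveI : NoZeroSMulDivisors ↥R F :=
    ⟨fun {c x} h => by
      rcases mul_eq_zero.mp (show (c : F) * x = 0 from h) with h1 | h1
      · exact Or.inl (Subtype.ext h1)
      · exact Or.inr h1⟩
  haveI : NoZeroSMulDivisors ↥R ↥M :=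
    Function.Injective.noZeroSMulDivisors _ Subtype.coe_injective rfl (fun _ _ => rfl)
  haveI : Module.Free ↥R ↥M := Module.free_of_finite_type_torsion_free' (R := ↥R) (M := ↥M)
  have hVM : V ≤ M.restrictScalars (constants F d hd) := by
    rw [← hsV]
    refine le_trans (Submodule.span_le_restrictScalars _ ↥R _) ?_
    intro x hx
    exact Submodule.span_mono Set.subset_union_left hx
  have hWM : W ≤ M.restrictScalars (constants F d hd) := by
    rw [← hsW]
    refine le_trans (Submodule.span_le_restrictScalars _ ↥R _) ?_
    intro x hx
    exact Submodule.span_mono Set.subset_union_right hx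
  let b := Module.Free.chooseBasis ↥R ↥M
  have tmem : t ∈ R := ⟨Polynomial.X, Polynomial.aeval_X t⟩
  set tR : ↥R := ⟨t, tmem⟩ with htRdef
  have hψX : ψ.symm tR = Polynomial.X := by
    have : ψ Polynomial.X = tR := by
      apply Subtype.ext
      exact (AlgEquiv.ofInjective_apply _ hinj Polynomial.X).trans (Polynomial.aeval_X t)
    rw [← this, AlgEquiv.symm_apply_apply]
  -- the degree bound
  set g : F → ℕ := fun x =>
    if h : x ∈ M then
      Finset.univ.sup fun i => (ψ.symm (b.repr (⟨x, h⟩ : ↥M) i)).natDegree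
    else 0 with hgdef
  set B : ℕ := sW.sup g with hBdef
  have hWM' : ∀ {x : F}, x ∈ Submodule.span (constants F d hd) (↑sW : Set F) → x ∈ M :=
    fun hx => hWM (hsW ▸ hx)
  have key : ∀ x (hx : x ∈ W), ∀ i, (ψ.symm (b.repr (⟨x, hWM hx⟩ : ↥M) i)).natDegree ≤ B := by
    intro x hx
    rw [← hsW] at hx
    refine Submodule.span_induction
      (p := fun x _ => ∀ (hM : x ∈ M) i, (ψ.symm (b.repr (⟨x, hM⟩ : ↥M) i)).natDegree ≤ B)
      ?_ ?_ ?_ ?_ hx (hWM (hsW ▸ hx))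
    · intro y hy hM i
      have h1 : (ψ.symm (b.repr (⟨y, hM⟩ : ↥M) i)).natDegree ≤ g y := by
        rw [hgdef]
        simp only [dif_pos hM]
        exact Finset.le_sup (f := fun i => (ψ.symm (b.repr (⟨y, hM⟩ : ↥M) i)).natDegree) (Finset.mem_univ i)
      exact h1.trans (Finset.le_sup (Finset.mem_coe.mp hy))
    · intro hM i
      have : (⟨(0 : F), hM⟩ : ↥M) = 0 := rfl
      rw [this]
      simp
    · intro y z hy hz ihy ihz hM i
      have hyM : y ∈ M := hWM' hy
      have hzM : z ∈ M := hWM' hz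
      have : (⟨y + z, hM⟩ : ↥M) = ⟨y, hyM⟩ + ⟨z, hzM⟩ := rfl
      rw [this, map_add, Finsupp.add_apply, map_add]
      exact (Polynomial.natDegree_add_le _ _).trans (max_le (ihy hyM i) (ihz hzM i))
    · intro c y hy ihy hM i
      have hyM : y ∈ M := hWM' hy
      have h1 : (⟨c • y, hM⟩ : ↥M) = (algebraMap (constants F d hd) ↥R c) • ⟨y, hyM⟩ := by
        apply Subtype.ext
        rw [Submodule.coe_smul_of_tower, algebraMap_smul]
      rw [h1, map_smul, Finsupp.smul_apply, smul_eq_mul, map_mul, AlgEquiv.commutes]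
      refine le_trans ?_ (ihy hyM i)
      exact Polynomial.natDegree_C_mul_le _ _
  refine ⟨t ^ (B + 1), pow_ne_zero _ ht0, ?_⟩
  rw [eq_bot_iff]
  rintro x hx
  rw [Submodule.mem_inf] at hx
  obtain ⟨hx1, hxW⟩ := hx
  rw [Submodule.mem_map] at hx1
  obtain ⟨v, hvV, hveq⟩ := hx1
  rw [Submodule.mem_bot]
  by_contra hx0
  have hveq' : t ^ (B + 1) * v = x := hveq
  have hv0 : v ≠ 0 := fun h => hx0 (by rw [← hveq', h, mul_zero])
  have hvM : v ∈ M := hVM hvV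
  have hxM : x ∈ M := hWM hxW
  have hsm : (⟨x, hxM⟩ : ↥M) = (tR ^ (B + 1)) • ⟨v, hvM⟩ := by
    apply Subtype.ext
    show x = (tR ^ (B + 1)) • v
    rw [← hveq', Algebra.smul_def]
    congr 1
  obtain ⟨i, hi⟩ : ∃ i, b.repr (⟨v, hvM⟩ : ↥M) i ≠ 0 := by
    by_contra hall
    push_neg at hall
    have h2 : b.repr (⟨v, hvM⟩ : ↥M) = 0 := Finsupp.ext hall
    have h3 : (⟨v, hvM⟩ : ↥M) = 0 := by
      have := congrArg b.repr.symm h2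
      simpa using this
    exact hv0 (by simpa using congrArg Subtype.val h3)
  have hcoordeq : b.repr (⟨x, hxM⟩ : ↥M) i = tR ^ (B + 1) * b.repr (⟨v, hvM⟩ : ↥M) i := by
    rw [hsm, map_smul, Finsupp.smul_apply, smul_eq_mul]
  have hpoly : ψ.symm (b.repr (⟨x, hxM⟩ : ↥M) i)
      = Polynomial.X ^ (B + 1) * ψ.symm (b.repr (⟨v, hvM⟩ : ↥M) i) := by
    rw [hcoordeq, map_mul, map_pow, hψX]
  have hp0 : ψ.symm (b.repr (⟨v, hvM⟩ : ↥M) i) ≠ 0 := fun h => hi (by simpa using congrArg ψ h)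
  have hdeg : (ψ.symm (b.repr (⟨x, hxM⟩ : ↥M) i)).natDegree
      = (B + 1) + (ψ.symm (b.repr (⟨v, hvM⟩ : ↥M) i)).natDegree := by
    rw [hpoly, Polynomial.natDegree_mul (pow_ne_zero _ Polynomial.X_ne_zero) hp0,
      Polynomial.natDegree_X_pow]
  have hle := key x hxW i
  omega
end

section
/- Assume the derivation of F is surjective. Then the map φ : F ⊕ (F ⊗_C F) → F⟨∂^{-1}⟩ defined by φ(a + Σ_{i=1}^n a_i ⊗ b_i) = a + Σ_{i=1}^n a_i∂^{-1}b_i is a bijection. -/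
open Finset

/-- The map `φ : F ⊕ (F ⊗_C F) → F(∂)`, `φ(a + Σ aᵢ ⊗ bᵢ) = a + Σ aᵢ ∂⁻¹ bᵢ`. -/
noncomputable def intOpMap {F : Type*} [Field F] (d : F → F) (hd : IsDerivation d)
    {A : Type*} [Ring A] (ι : F →+* A) (δ : A) (hA : IsDiffOpRing d A ι δ)
    {K : Type*} [DivisionRing K] (j : A →+* K) :
    F × (TensorProduct (constants F d hd) F F) → K :=
  fun p => j (ι p.1) +
    TensorProduct.liftAddHom
      (AddMonoidHom.mk'
        (fun a => AddMonoidHom.mk' (fun b => j (ι a) * (j δ)⁻¹ * j (ι b))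
          (by intro b₁ b₂; simp [map_add, mul_add]))
        (by intro a₁ a₂; ext b; simp [map_add, add_mul]))
      (by
        intro r a b
        simp only [AddMonoidHom.mk'_apply]
        have hr : d (r : F) = 0 := r.2
        have hcomm : Commute (j δ) (j (ι (r : F))) := by
          have h := hA.comm (r : F)
          rw [hr, map_zero, add_zero] at h
          show j δ * j (ι (r : F)) = j (ι (r : F)) * j δ
          rw [← map_mul, ← map_mul, h]
        have hux : (j δ)⁻¹ * j (ι (r : F)) = j (ι (r : F)) * (j δ)⁻¹ :=
          hcomm.inv_left₀.eq
        have hpx : j (ι a) * j (ι (r : F)) = j (ι (r : F)) * j (ι a) := by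
          rw [← map_mul, ← map_mul, ← map_mul, ← map_mul, mul_comm a ((r : F))]
        have hra : (r • a : F) = (r : F) * a := rfl
        have hrb : (r • b : F) = (r : F) * b := rfl
        rw [hra, hrb]
        simp only [map_mul, mul_assoc]
        rw [← mul_assoc ((j δ)⁻¹) (j (ι (r : F))) (j (ι b)), hux,
          mul_assoc (j (ι (r : F))) ((j δ)⁻¹) (j (ι b)),
          ← mul_assoc (j (ι a)) (j (ι (r : F))) ((j δ)⁻¹ * j (ι b)), hpx,
          mul_assoc (j (ι (r : F))) (j (ι a)) ((j δ)⁻¹ * j (ι b))]) p.2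

section AuxIntOp

variable {F : Type*} [Field F]

/-- Sums commute with a derivation. -/
theorem IsDerivation.map_sum'_s9 {d : F → F} (hd : IsDerivation d) {α : Type*} (s : Finset α)
    (f : α → F) : d (∑ i ∈ s, f i) = ∑ i ∈ s, d (f i) :=
  map_sum (AddMonoidHom.mk' d hd.map_add) f s

variable {d : F → F} {A : Type*} [Ring A] {ι : F →+* A} {δ : A}
variable {K : Type*} [DivisionRing K] {j : A →+* K}

/-- The tensor part of `intOpMap`, as an `AddMonoidHom`. -/
noncomputable def Lmap (d : F → F) (hd : IsDerivation d) (ι : F →+* A) (δ : A)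
    (hA : IsDiffOpRing d A ι δ) (j : A →+* K) :
    TensorProduct (constants F d hd) F F →+ K :=
  TensorProduct.liftAddHom
      (AddMonoidHom.mk'
        (fun a => AddMonoidHom.mk' (fun b => j (ι a) * (j δ)⁻¹ * j (ι b))
          (by intro b₁ b₂; simp [map_add, mul_add]))
        (by intro a₁ a₂; ext b; simp [map_add, add_mul]))
      (by
        intro r a b
        simp only [AddMonoidHom.mk'_apply]
        have hr : d (r : F) = 0 := r.2
        have hcomm : Commute (j δ) (j (ι (r : F))) := by
          have h := hA.comm (r : F)
          rw [hr, map_zero, add_zero] at h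
          show j δ * j (ι (r : F)) = j (ι (r : F)) * j δ
          rw [← map_mul, ← map_mul, h]
        have hux : (j δ)⁻¹ * j (ι (r : F)) = j (ι (r : F)) * (j δ)⁻¹ :=
          hcomm.inv_left₀.eq
        have hpx : j (ι a) * j (ι (r : F)) = j (ι (r : F)) * j (ι a) := by
          rw [← map_mul, ← map_mul, ← map_mul, ← map_mul, mul_comm a ((r : F))]
        have hra : (r • a : F) = (r : F) * a := rfl
        have hrb : (r • b : F) = (r : F) * b := rfl
        rw [hra, hrb]
        simp only [map_mul, mul_assoc]
        rw [← mul_assoc ((j δ)⁻¹) (j (ι (r : F))) (j (ι b)), hux,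
          mul_assoc (j (ι (r : F))) ((j δ)⁻¹) (j (ι b)),
          ← mul_assoc (j (ι a)) (j (ι (r : F))) ((j δ)⁻¹ * j (ι b)), hpx,
          mul_assoc (j (ι (r : F))) (j (ι a)) ((j δ)⁻¹ * j (ι b))])

theorem intOpMap_apply' (hd : IsDerivation d) (hA : IsDiffOpRing d A ι δ) (j : A →+* K)
    (p : F × TensorProduct (constants F d hd) F F) :
    intOpMap d hd ι δ hA j p = j (ι p.1) + Lmap d hd ι δ hA j p.2 := rfl

theorem Lmap_tmul (hd : IsDerivation d) (hA : IsDiffOpRing d A ι δ) (j : A →+* K)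
    (a b : F) :
    Lmap d hd ι δ hA j (a ⊗ₜ b) = j (ι a) * (j δ)⁻¹ * j (ι b) := rfl

end AuxIntOp
section AuxIntOp2

variable {F : Type*} [Field F] {d : F → F} {A : Type*} [Ring A] {ι : F →+* A} {δ : A}
variable {K : Type*} [DivisionRing K] {j : A →+* K}

theorem delta_ne_zero (hA : IsDiffOpRing d A ι δ) (hK : IsQuotientDivisionRing A K j) :
    δ ≠ 0 := by
  intro h
  obtain ⟨c, _, huniq⟩ := hA.repr δ
  have h1 : δ = (Finsupp.single 1 (1 : F)).sum fun i x => ι x * δ ^ i := by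
    rw [Finsupp.sum_single_index (by simp)]; simp [h]
  have h2 : δ = (0 : ℕ →₀ F).sum fun i x => ι x * δ ^ i := by simp [h]
  have := (huniq _ h1).trans (huniq _ h2).symm
  exact one_ne_zero (Finsupp.single_eq_zero.mp this)

theorem jdelta_ne_zero (hA : IsDiffOpRing d A ι δ) (hK : IsQuotientDivisionRing A K j) :
    j δ ≠ 0 := fun h => delta_ne_zero hA hK (hK.inj (by simp [h]))

/-- No element of `A` is a left inverse of `δ`. -/
theorem no_left_inv (hA : IsDiffOpRing d A ι δ) (hK : IsQuotientDivisionRing A K j)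
    (S : A) : S * δ ≠ 1 := by
  intro hS
  obtain ⟨c, hc, _⟩ := hA.repr S
  obtain ⟨c1, hc1, huniq1⟩ := hA.repr 1
  -- c' := shift of c by one
  set c' : ℕ →₀ F := c.mapDomain (· + 1) with hc'
  have hrepr : (1 : A) = c'.sum fun i x => ι x * δ ^ i := by
    rw [← hS, hc, Finsupp.sum_mapDomain_index (by simp) (by intro a b₁ b₂; rw [map_add, add_mul]),
      Finsupp.sum_mul]
    congr 1; ext i x
    rw [pow_succ, mul_assoc]
  have h1 : (1 : A) = (Finsupp.single 0 (1 : F)).sum fun i x => ι x * δ ^ i := by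
    rw [Finsupp.sum_single_index (by simp)]; simp
  have heq : c' = Finsupp.single 0 (1 : F) := (huniq1 _ hrepr).trans (huniq1 _ h1).symm
  have h0 : c' 0 = 0 := by
    rw [hc']
    exact Finsupp.mapDomain_notin_range _ _ (by simp)
  rw [heq] at h0
  simp at h0

end AuxIntOp2
section AuxIntOp3

variable {F : Type*} [Field F] {d : F → F} {A : Type*} [Ring A] {ι : F →+* A} {δ : A}
variable {K : Type*} [DivisionRing K] {j : A →+* K}

theorem comm_K (hA : IsDiffOpRing d A ι δ) (a : F) :
    j δ * j (ι a) = j (ι a) * j δ + j (ι (d a)) := by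
  rw [← map_mul, ← map_mul, hA.comm, map_add, map_mul]

theorem left_mul_delta (hA : IsDiffOpRing d A ι δ) (hK : IsQuotientDivisionRing A K j)
    (a : F) : j δ * (j (ι a) * (j δ)⁻¹) = j (ι a) + j (ι (d a)) * (j δ)⁻¹ := by
  have hD := jdelta_ne_zero hA hK
  rw [← mul_assoc, comm_K hA, add_mul, mul_assoc, mul_inv_cancel₀ hD, mul_one]

theorem eu_comm (hA : IsDiffOpRing d A ι δ) (hK : IsQuotientDivisionRing A K j)
    (a : F) : j (ι a) * (j δ)⁻¹
      = (j δ)⁻¹ * j (ι a) + (j δ)⁻¹ * j (ι (d a)) * (j δ)⁻¹ := by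
  have hD := jdelta_ne_zero hA hK
  calc j (ι a) * (j δ)⁻¹ = ((j δ)⁻¹ * j δ) * (j (ι a) * (j δ)⁻¹) := by
        rw [inv_mul_cancel₀ hD, one_mul]
    _ = (j δ)⁻¹ * (j δ * (j (ι a) * (j δ)⁻¹)) := by rw [mul_assoc]
    _ = (j δ)⁻¹ * (j (ι a) + j (ι (d a)) * (j δ)⁻¹) := by rw [left_mul_delta hA hK]
    _ = (j δ)⁻¹ * j (ι a) + (j δ)⁻¹ * j (ι (d a)) * (j δ)⁻¹ := by
        rw [mul_add, mul_assoc]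

/-- The key integration-by-parts identity: `∂⁻¹ b ∂⁻¹ = B ∂⁻¹ - ∂⁻¹ B` when `B' = b`. -/
theorem key_prod (hA : IsDiffOpRing d A ι δ) (hK : IsQuotientDivisionRing A K j)
    {b B : F} (hB : d B = b) :
    (j δ)⁻¹ * j (ι b) * (j δ)⁻¹ = j (ι B) * (j δ)⁻¹ - (j δ)⁻¹ * j (ι B) := by
  have h := eu_comm hA hK (j := j) B
  rw [hB] at h
  rw [eq_sub_iff_add_eq', ← h]

theorem right_mul_delta (hA : IsDiffOpRing d A ι δ) (hK : IsQuotientDivisionRing A K j)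
    (b : F) : ((j δ)⁻¹ * j (ι b)) * j δ = j (ι b) - (j δ)⁻¹ * j (ι (d b)) := by
  have hD := jdelta_ne_zero hA hK
  have h : j (ι b) * j δ = j δ * j (ι b) - j (ι (d b)) :=
    eq_sub_iff_add_eq.mpr (comm_K hA b).symm
  rw [mul_assoc, h, mul_sub, ← mul_assoc, inv_mul_cancel₀ hD, one_mul]

/-- Step lemma: from a relation `Σ xᵢ ∂⁻¹ cᵢ = Q ∈ A` derive one for the derivatives `cᵢ'`. -/
theorem step_rel (hA : IsDiffOpRing d A ι δ) (hK : IsQuotientDivisionRing A K j)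
    {ι'' : Type*} [Fintype ι''] (x c : ι'' → F) (Q : A)
    (h : ∑ i, j (ι (x i)) * (j δ)⁻¹ * j (ι (c i)) = j Q) :
    ∑ i, j (ι (x i)) * (j δ)⁻¹ * j (ι (d (c i)))
      = j ((∑ i, ι (x i * c i)) - Q * δ) := by
  have hmul := congrArg (· * j δ) h
  simp only [Finset.sum_mul] at hmul
  have hterm : ∀ i : ι'', (j (ι (x i)) * (j δ)⁻¹ * j (ι (c i))) * j δ
      = j (ι (x i * c i)) - j (ι (x i)) * (j δ)⁻¹ * j (ι (d (c i))) := by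
    intro i
    rw [mul_assoc (j (ι (x i))), mul_assoc (j (ι (x i))), right_mul_delta hA hK,
      mul_sub, ← mul_assoc]
    simp only [map_mul]
  rw [Finset.sum_congr rfl fun i _ => hterm i, Finset.sum_sub_distrib] at hmul
  rw [map_sub, map_sum, map_mul, eq_sub_iff_add_eq]
  rw [sub_eq_iff_eq_add] at hmul
  rw [hmul, add_comm]

end AuxIntOp3
section AuxIntOp4
open scoped Classical

variable {F : Type*} [Field F] {d : F → F}

/-- If all "Wronskian-type" relations `Σ mᵢ (wᵢ)⁽ᵏ⁾ = 0` hold and the `wᵢ` are linearly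
independent over constants, then `m = 0`. -/
theorem m_eq_zero (hd : IsDerivation d) {ι'' : Type*} [Fintype ι''] [DecidableEq ι'']
    (w : ι'' → F) (hw : LinearIndependent (constants F d hd) w) :
    ∀ (N : ℕ) (m : ι'' → F),
      (Finset.univ.filter fun i => m i ≠ 0).card ≤ N →
      (∀ k : ℕ, ∑ i, m i * d^[k] (w i) = 0) → m = 0 := by
  intro N
  induction N with
  | zero =>
    intro m hcard _
    funext i
    show m i = 0
    by_contra hi
    have : i ∈ Finset.univ.filter fun i => m i ≠ 0 := by simp [hi]
    have := Finset.card_pos.mpr ⟨i, this⟩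
    omega
  | succ N ih =>
    intro m hcard hrel
    by_contra hm0
    have : ∃ i₀, m i₀ ≠ 0 := by
      by_contra h
      push_neg at h
      exact hm0 (funext fun i => h i)
    obtain ⟨i₀, hi₀⟩ := this
    set m' : ι'' → F := fun i => (m i₀)⁻¹ * m i with hm'
    have hrel' : ∀ k : ℕ, ∑ i, m' i * d^[k] (w i) = 0 := by
      intro k
      have : ∑ i, m' i * d^[k] (w i) = (m i₀)⁻¹ * ∑ i, m i * d^[k] (w i) := by
        rw [Finset.mul_sum]
        exact Finset.sum_congr rfl fun i _ => by rw [hm', mul_assoc]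
      rw [this, hrel k, mul_zero]
    set m'' : ι'' → F := fun i => d (m' i) with hm''
    have hrel'' : ∀ k : ℕ, ∑ i, m'' i * d^[k] (w i) = 0 := by
      intro k
      have h1 : d (∑ i, m' i * d^[k] (w i)) = 0 := by rw [hrel' k, hd.map_zero']
      rw [hd.map_sum'_s9] at h1
      have h2 : ∀ i : ι'', d (m' i * d^[k] (w i))
          = m'' i * d^[k] (w i) + m' i * d^[k+1] (w i) := by
        intro i
        rw [hd.leibniz, hm'']
        congr 1
        rw [Function.iterate_succ_apply']
      rw [Finset.sum_congr rfl fun i _ => h2 i, Finset.sum_add_distrib, hrel' (k+1),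
        add_zero] at h1
      exact h1
    have hm'i₀ : m' i₀ = 1 := inv_mul_cancel₀ hi₀
    have hsub : (Finset.univ.filter fun i => m'' i ≠ 0)
        ⊆ (Finset.univ.filter fun i => m' i ≠ 0).erase i₀ := by
      intro i hi
      simp only [Finset.mem_filter, Finset.mem_univ, true_and] at hi
      rw [Finset.mem_erase]
      constructor
      · intro h
        apply hi
        rw [hm''] at *
        simp only [h, hm'i₀]
        exact hd.map_one'
      · simp only [Finset.mem_filter, Finset.mem_univ, true_and]
        intro h
        apply hi
        rw [hm'']
        simp only [h, hd.map_zero']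
    have hfiltereq : (Finset.univ.filter fun i => m' i ≠ 0)
        = (Finset.univ.filter fun i => m i ≠ 0) := by
      apply Finset.filter_congr
      intro i _
      simp only [hm', ne_eq, mul_eq_zero, not_or, inv_eq_zero, eq_iff_iff]
      constructor
      · exact fun h => h.2
      · exact fun h => ⟨hi₀, h⟩
    have hmem : i₀ ∈ (Finset.univ.filter fun i => m' i ≠ 0) := by
      simp [hm'i₀]
    have hcard'' : (Finset.univ.filter fun i => m'' i ≠ 0).card ≤ N := by
      have h1 := Finset.card_le_card hsub
      rw [Finset.card_erase_of_mem hmem, hfiltereq] at h1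
      omega
    have hm''0 := ih m'' hcard'' hrel''
    -- all m' i are constants
    have hconst : ∀ i, m' i ∈ constants F d hd := by
      intro i
      have : m'' i = 0 := by rw [hm''0]; rfl
      exact this
    set c : ι'' → constants F d hd := fun i => ⟨m' i, hconst i⟩ with hc
    have hzero : ∑ i, c i • w i = 0 := by
      have : ∀ i : ι'', c i • w i = m' i * w i := fun i => rfl
      rw [Finset.sum_congr rfl fun i _ => this i]
      simpa using hrel' 0
    have := Fintype.linearIndependent_iff.mp hw c hzero i₀
    rw [hc] at this
    have : m' i₀ = 0 := congrArg Subtype.val this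
    rw [hm'i₀] at this
    exact one_ne_zero this

/-- The derivative vectors of a constants-linearly-independent family span everything. -/
theorem wronskian_span (hd : IsDerivation d) {ι'' : Type*} [Fintype ι''] [DecidableEq ι'']
    (w : ι'' → F) (hw : LinearIndependent (constants F d hd) w) :
    Submodule.span F (Set.range fun k : ℕ => fun i => d^[k] (w i)) = (⊤ : Submodule F (ι'' → F)) := by
  by_contra hne
  have : ∃ v : ι'' → F, v ∉ Submodule.span F (Set.range fun k : ℕ => fun i => d^[k] (w i)) := by
    by_contra h
    push_neg at h
    exact hne (Submodule.eq_top_iff'.mpr h)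
  obtain ⟨v, hv⟩ := this
  set p := Submodule.span F (Set.range fun k : ℕ => fun i => d^[k] (w i)) with hp
  have hπv : p.mkQ v ≠ 0 := by
    rw [Submodule.mkQ_apply, ne_eq, Submodule.Quotient.mk_eq_zero]
    exact hv
  have : ¬ ∀ φ : Module.Dual F ((ι'' → F) ⧸ p), φ (p.mkQ v) = 0 := by
    rw [Module.forall_dual_apply_eq_zero_iff]
    exact hπv
  push_neg at this
  obtain ⟨φ, hφ⟩ := this
  set μ : (ι'' → F) →ₗ[F] F := φ.comp p.mkQ with hμ
  have hμspan : ∀ z ∈ p, μ z = 0 := by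
    intro z hz
    rw [hμ]
    simp only [LinearMap.comp_apply, Submodule.mkQ_apply]
    rw [(Submodule.Quotient.mk_eq_zero p).mpr hz, map_zero]
  set m : ι'' → F := fun i => μ (fun j => if i = j then (1 : F) else 0) with hm
  have hμeq : ∀ z : ι'' → F, μ z = ∑ i, z i * m i := by
    intro z
    conv_lhs => rw [pi_eq_sum_univ z]
    rw [map_sum]
    exact Finset.sum_congr rfl fun i _ => by rw [map_smul, smul_eq_mul, hm]
  have hrel : ∀ k : ℕ, ∑ i, m i * d^[k] (w i) = 0 := by
    intro k
    have : μ (fun i => d^[k] (w i)) = 0 :=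
      hμspan _ (Submodule.subset_span ⟨k, rfl⟩)
    rw [hμeq] at this
    rw [← this]
    exact Finset.sum_congr rfl fun i _ => mul_comm _ _
  have hm0 : m = 0 := m_eq_zero hd w hw (Finset.univ.filter fun i => m i ≠ 0).card m le_rfl hrel
  apply hφ
  have : μ v = 0 := by
    rw [hμeq, hm0]
    simp
  rw [hμ] at this
  exact this

end AuxIntOp4
section AuxIntOp5
open scoped Classical

variable {F : Type*} [Field F] {d : F → F} {A : Type*} [Ring A] {ι : F →+* A} {δ : A}
variable {K : Type*} [DivisionRing K] {j : A →+* K}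

theorem coeff_zero (hd : IsDerivation d) (hA : IsDiffOpRing d A ι δ)
    (hK : IsQuotientDivisionRing A K j) {ι'' : Type*} [Fintype ι''] [DecidableEq ι'']
    (x w : ι'' → F) (hw : LinearIndependent (constants F d hd) w) (Q0 : A)
    (hrel : ∑ i, j (ι (x i)) * (j δ)⁻¹ * j (ι (w i)) = j Q0) :
    ∀ i₀, x i₀ = 0 := by
  have hrelk : ∀ k : ℕ, ∃ Qk : A,
      ∑ i, j (ι (x i)) * (j δ)⁻¹ * j (ι (d^[k] (w i))) = j Qk := by
    intro k
    induction k with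
    | zero => exact ⟨Q0, by simpa using hrel⟩
    | succ k ih =>
      obtain ⟨Q, hQ⟩ := ih
      refine ⟨(∑ i, ι (x i * d^[k] (w i))) - Q * δ, ?_⟩
      have h := step_rel hA hK x (fun i => d^[k] (w i)) Q hQ
      have : ∀ i : ι'', d^[k+1] (w i) = d (d^[k] (w i)) := fun i =>
        Function.iterate_succ_apply' d k (w i)
      simp only [this]
      exact h
  choose R hR using hrelk
  intro i₀
  by_contra hx
  have hspan := wronskian_span hd w hw
  have hmem : (fun i => if i = i₀ then (1 : F) else 0)
      ∈ Submodule.span F (Set.range fun k : ℕ => fun i => d^[k] (w i)) := by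
    rw [hspan]; trivial
  rw [Finsupp.mem_span_range_iff_exists_finsupp] at hmem
  obtain ⟨lam, hlam⟩ := hmem
  have hcomb : ∀ i, (∑ k ∈ lam.support, lam k * d^[k] (w i))
      = if i = i₀ then (1 : F) else 0 := by
    intro i
    have := congrFun hlam i
    rw [Finsupp.sum, Finset.sum_apply] at this
    simpa using this
  have hkey : j (lam.sum fun k a => R k * ι a) = j (ι (x i₀)) * (j δ)⁻¹ := by
    rw [map_finsuppSum, Finsupp.sum]
    have h1 : ∀ k ∈ lam.support, j (R k * ι (lam k))
        = ∑ i, j (ι (x i)) * (j δ)⁻¹ * j (ι (d^[k] (w i) * lam k)) := by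
      intro k _
      rw [map_mul, ← hR k, Finset.sum_mul]
      exact Finset.sum_congr rfl fun i _ => by simp [map_mul, mul_assoc]
    rw [Finset.sum_congr rfl h1, Finset.sum_comm]
    have h2 : ∀ i : ι'', (∑ k ∈ lam.support, j (ι (x i)) * (j δ)⁻¹ * j (ι (d^[k] (w i) * lam k)))
        = j (ι (x i)) * (j δ)⁻¹ * j (ι (if i = i₀ then (1 : F) else 0)) := by
      intro i
      rw [← Finset.mul_sum, ← map_sum, ← map_sum,
        show (∑ k ∈ lam.support, d^[k] (w i) * lam k)
            = ∑ k ∈ lam.support, lam k * d^[k] (w i) from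
          Finset.sum_congr rfl fun k _ => mul_comm _ _,
        hcomb i]
    rw [Finset.sum_congr rfl fun i _ => h2 i,
      Finset.sum_eq_single i₀ (fun i _ hne => by simp [hne]) (by simp)]
    simp
  -- now (j δ)⁻¹ = j S for some S, contradiction
  have hu : (j δ)⁻¹ = j (ι (x i₀)⁻¹ * lam.sum fun k a => R k * ι a) := by
    rw [map_mul, hkey, ← mul_assoc, ← map_mul, ← map_mul, inv_mul_cancel₀ hx,
      map_one, map_one, one_mul]
  have h1 : j ((ι (x i₀)⁻¹ * lam.sum fun k a => R k * ι a) * δ) = j 1 := by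
    rw [map_mul, ← hu, inv_mul_cancel₀ (jdelta_ne_zero hA hK), map_one]
  exact no_left_inv hA hK _ (hK.inj h1)

end AuxIntOp5
section AuxIntOp6
open scoped Classical

variable {F : Type*} [Field F] {d : F → F} {A : Type*} [Ring A] {ι : F →+* A} {δ : A}
variable {K : Type*} [DivisionRing K] {j : A →+* K}

theorem ker_triv (hd : IsDerivation d) (hA : IsDiffOpRing d A ι δ)
    (hK : IsQuotientDivisionRing A K j) (a : F)
    (t : TensorProduct (constants F d hd) F F)
    (h : j (ι a) + Lmap d hd ι δ hA j t = 0) : a = 0 ∧ t = 0 := by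
  haveI : Nontrivial A := j.domain_nontrivial
  let b := Module.Basis.ofVectorSpace (constants F d hd) F
  let ψ : TensorProduct (constants F d hd) F F ≃ₗ[constants F d hd] (Module.Basis.ofVectorSpaceIndex (constants F d hd) F →₀ F) :=
    (TensorProduct.congr (LinearEquiv.refl (constants F d hd) F) b.repr).trans
      (TensorProduct.finsuppScalarRight (constants F d hd) (constants F d hd) F _)
  set g := ψ t with hg
  have ht : t = ∑ i ∈ g.support, (g i) ⊗ₜ[constants F d hd] (b i : F) := by
    have h1 : t = ψ.symm g := by rw [hg, LinearEquiv.symm_apply_apply]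
    have h2 : g = ∑ i ∈ g.support, Finsupp.single i (g i) :=
      (Finsupp.sum_single g).symm
    rw [h1]
    conv_lhs => rw [h2]
    rw [map_sum]
    refine Finset.sum_congr rfl fun i _ => ?_
    show ((TensorProduct.congr (LinearEquiv.refl (constants F d hd) F) b.repr).trans
      (TensorProduct.finsuppScalarRight (constants F d hd) (constants F d hd) F _)).symm (Finsupp.single i (g i)) = _
    rw [LinearEquiv.trans_symm, LinearEquiv.trans_apply,
      TensorProduct.finsuppScalarRight_symm_apply_single,
      TensorProduct.congr_symm_tmul]
    simp [b.repr_symm_single_one]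
  have hLt : Lmap d hd ι δ hA j t
      = ∑ i ∈ g.support, j (ι (g i)) * (j δ)⁻¹ * j (ι (b i : F)) := by
    conv_lhs => rw [ht]
    rw [map_sum]
    exact Finset.sum_congr rfl fun i _ => Lmap_tmul hd hA j _ _
  have hrel : ∑ i : ↥g.support, j (ι (g i)) * (j δ)⁻¹ * j (ι (b i : F)) = j (-ι a) := by
    rw [Finset.sum_coe_sort g.support (fun i => j (ι (g i)) * (j δ)⁻¹ * j (ι (b i : F))),
      ← hLt, map_neg]
    exact eq_neg_of_add_eq_zero_right h
  have hw : LinearIndependent (constants F d hd) (fun i : ↥g.support => (b i : F)) :=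
    b.linearIndependent.comp (fun i : ↥g.support => (i : Module.Basis.ofVectorSpaceIndex (constants F d hd) F))
      Subtype.val_injective
  have hzero := coeff_zero hd hA hK (fun i : ↥g.support => g i)
    (fun i : ↥g.support => (b i : F)) hw (-ι a) hrel
  have hg0 : g = 0 := by
    ext i
    by_cases hi : i ∈ g.support
    · exact hzero ⟨i, hi⟩
    · simpa using Finsupp.notMem_support_iff.mp hi
  have ht0 : t = 0 := by
    have h1 : ψ t = ψ 0 := by rw [LinearEquiv.map_zero, ← hg0, hg]
    exact ψ.injective h1
  refine ⟨?_, ht0⟩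
  rw [ht0, map_zero, add_zero] at h
  have : ι a = ι 0 := hK.inj (by simpa using h)
  exact ι.injective this

end AuxIntOp6
section AuxIntOp7

variable {F : Type*} [Field F] {d : F → F} {A : Type*} [Ring A] {ι : F →+* A} {δ : A}
variable {K : Type*} [DivisionRing K] {j : A →+* K}

theorem mulL_left (hd : IsDerivation d) (hA : IsDiffOpRing d A ι δ) (a : F)
    (s : TensorProduct (constants F d hd) F F) :
    ∃ s', j (ι a) * Lmap d hd ι δ hA j s = Lmap d hd ι δ hA j s' := by
  induction s using TensorProduct.induction_on with
  | zero => exact ⟨0, by simp⟩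
  | tmul c f =>
    refine ⟨(a * c) ⊗ₜ f, ?_⟩
    rw [Lmap_tmul, Lmap_tmul]
    simp only [map_mul, mul_assoc]
  | add s₁ s₂ ih₁ ih₂ =>
    obtain ⟨r₁, h₁⟩ := ih₁
    obtain ⟨r₂, h₂⟩ := ih₂
    exact ⟨r₁ + r₂, by rw [map_add, mul_add, h₁, h₂, map_add]⟩

theorem mulL_right (hd : IsDerivation d) (hA : IsDiffOpRing d A ι δ) (c : F)
    (s : TensorProduct (constants F d hd) F F) :
    ∃ s', Lmap d hd ι δ hA j s * j (ι c) = Lmap d hd ι δ hA j s' := by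
  induction s using TensorProduct.induction_on with
  | zero => exact ⟨0, by simp⟩
  | tmul x f =>
    refine ⟨x ⊗ₜ (f * c), ?_⟩
    rw [Lmap_tmul, Lmap_tmul]
    simp only [map_mul, mul_assoc]
  | add s₁ s₂ ih₁ ih₂ =>
    obtain ⟨r₁, h₁⟩ := ih₁
    obtain ⟨r₂, h₂⟩ := ih₂
    exact ⟨r₁ + r₂, by rw [map_add, add_mul, h₁, h₂, map_add]⟩

theorem mulLL (hd : IsDerivation d) (hA : IsDiffOpRing d A ι δ)
    (hK : IsQuotientDivisionRing A K j) (hsurj : Function.Surjective d)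
    (t s : TensorProduct (constants F d hd) F F) :
    ∃ r, Lmap d hd ι δ hA j t * Lmap d hd ι δ hA j s = Lmap d hd ι δ hA j r := by
  induction t using TensorProduct.induction_on with
  | zero => exact ⟨0, by simp⟩
  | tmul a b =>
    induction s using TensorProduct.induction_on with
    | zero => exact ⟨0, by simp⟩
    | tmul c f =>
      obtain ⟨W, hW⟩ := hsurj (b * c)
      refine ⟨(a * W) ⊗ₜ f - a ⊗ₜ (W * f), ?_⟩
      rw [Lmap_tmul, Lmap_tmul, map_sub, Lmap_tmul, Lmap_tmul]
      have h1 : j (ι a) * (j δ)⁻¹ * j (ι b) * (j (ι c) * (j δ)⁻¹ * j (ι f))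
          = j (ι a) * ((j δ)⁻¹ * j (ι (b * c)) * (j δ)⁻¹) * j (ι f) := by
        simp only [map_mul, mul_assoc]
      rw [h1, key_prod hA hK hW]
      simp only [map_mul, mul_sub, sub_mul, mul_assoc]
    | add s₁ s₂ ih₁ ih₂ =>
      obtain ⟨r₁, h₁⟩ := ih₁
      obtain ⟨r₂, h₂⟩ := ih₂
      exact ⟨r₁ + r₂, by rw [map_add, mul_add, h₁, h₂, map_add]⟩
  | add t₁ t₂ ih₁ ih₂ =>
    obtain ⟨r₁, h₁⟩ := ih₁
    obtain ⟨r₂, h₂⟩ := ih₂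
    exact ⟨r₁ + r₂, by rw [map_add, add_mul, h₁, h₂, map_add]⟩

/-- The range of `intOpMap` is a subring of `K`. -/
noncomputable def rangeSubring (hd : IsDerivation d) (hA : IsDiffOpRing d A ι δ)
    (hK : IsQuotientDivisionRing A K j) (hsurj : Function.Surjective d) : Subring K where
  carrier := Set.range (intOpMap d hd ι δ hA j)
  zero_mem' := ⟨(0, 0), by simp [intOpMap_apply']⟩
  one_mem' := ⟨(1, 0), by simp [intOpMap_apply']⟩
  add_mem' := by
    rintro _ _ ⟨p, rfl⟩ ⟨q, rfl⟩
    refine ⟨(p.1 + q.1, p.2 + q.2), ?_⟩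
    simp only [intOpMap_apply', map_add]
    abel
  neg_mem' := by
    rintro _ ⟨p, rfl⟩
    refine ⟨(-p.1, -p.2), ?_⟩
    simp only [intOpMap_apply', map_neg]
    abel
  mul_mem' := by
    rintro _ _ ⟨p, rfl⟩ ⟨q, rfl⟩
    obtain ⟨s₁, hs₁⟩ := mulL_left hd hA (j := j) p.1 q.2
    obtain ⟨s₂, hs₂⟩ := mulL_right hd hA (j := j) q.1 p.2
    obtain ⟨s₃, hs₃⟩ := mulLL hd hA hK hsurj p.2 q.2
    refine ⟨(p.1 * q.1, s₁ + s₂ + s₃), ?_⟩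
    simp only [intOpMap_apply', map_add, map_mul]
    rw [add_mul, mul_add, mul_add, hs₁, hs₂, hs₃]
    abel

end AuxIntOp7
/-- If the derivation of `F` is surjective, then
`φ : F ⊕ (F ⊗_C F) → F⟨∂⁻¹⟩`, `φ(a + Σ aᵢ ⊗ bᵢ) = a + Σ aᵢ ∂⁻¹ bᵢ`, is a bijection onto the
ring of integration operators `F⟨∂⁻¹⟩` (the subring of `F(∂)` generated by `F` and `∂⁻¹`). -/
theorem intOpMap_bijective {F : Type*} [Field F] [CharZero F]
    (d : F → F) (hd : IsDerivation d)
    (halg : IsAlgClosed (constants F d hd))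
    (hne : constants F d hd ≠ ⊤)
    (hsurj : Function.Surjective d)
    {A : Type*} [Ring A] (ι : F →+* A) (δ : A) (hA : IsDiffOpRing d A ι δ)
    {K : Type*} [DivisionRing K] (j : A →+* K) (hK : IsQuotientDivisionRing A K j) :
    Function.Injective (intOpMap d hd ι δ hA j) ∧
    Set.range (intOpMap d hd ι δ hA j)
      = (Subring.closure (Set.range (j.comp ι) ∪ {(j δ)⁻¹}) : Set K) := by
  constructor
  · -- injectivity
    intro p q hpq
    have key : j (ι p.1) + Lmap d hd ι δ hA j p.2 = j (ι q.1) + Lmap d hd ι δ hA j q.2 := by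
      rw [← intOpMap_apply' hd hA j p, ← intOpMap_apply' hd hA j q]
      exact hpq
    have h : j (ι (p.1 - q.1)) + Lmap d hd ι δ hA j (p.2 - q.2) = 0 := by
      simp only [map_sub]
      rw [sub_add_sub_comm, key, sub_self]
    obtain ⟨h1, h2⟩ := ker_triv hd hA hK _ _ h
    exact Prod.ext (sub_eq_zero.mp h1) (sub_eq_zero.mp h2)
  · -- range equality
    apply Set.Subset.antisymm
    · rintro _ ⟨p, rfl⟩
      rw [intOpMap_apply' hd hA j p]
      show _ ∈ Subring.closure (Set.range (j.comp ι) ∪ {(j δ)⁻¹})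
      apply Subring.add_mem
      · exact Subring.subset_closure (Set.mem_union_left _ ⟨p.1, rfl⟩)
      · induction p.2 using TensorProduct.induction_on with
        | zero => simp only [map_zero]; exact Subring.zero_mem _
        | tmul a b =>
          rw [Lmap_tmul]
          exact Subring.mul_mem _
            (Subring.mul_mem _
              (Subring.subset_closure (Set.mem_union_left _ ⟨a, rfl⟩))
              (Subring.subset_closure (Set.mem_union_right _ rfl)))
            (Subring.subset_closure (Set.mem_union_left _ ⟨b, rfl⟩))
        | add s₁ s₂ ih₁ ih₂ =>
          rw [map_add]
          exact Subring.add_mem _ ih₁ ih₂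
    · intro z hz
      have hle : Subring.closure (Set.range (j.comp ι) ∪ {(j δ)⁻¹})
          ≤ rangeSubring hd hA hK hsurj := by
        rw [Subring.closure_le]
        rintro y (⟨a, rfl⟩ | hy)
        · exact ⟨(a, 0), by simp [intOpMap_apply']⟩
        · rw [Set.mem_singleton_iff] at hy
          subst hy
          refine ⟨(0, (1 : F) ⊗ₜ (1 : F)), ?_⟩
          rw [intOpMap_apply', Lmap_tmul]
          simp
      exact hle hz
end
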